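/- Let Q ∈ ℝ^{n×n} and R ∈ ℝ^{m×m} be symmetric positive definite, A ∈ ℝ^{m×n}, b ∈ ℝ^m, and set M = Aᵀ R⁻¹ A Q. Let λ ≠ 0 and let V, W ∈ ℝ^{n×k} satisfy Vᵀ Q V = I_k = Wᵀ Q W and have equal column spaces. Then Vᵀ Q M V + λ² I_k and Wᵀ Q M W + λ² I_k are invertible and W (Wᵀ Q M W + λ² I_k)⁻¹ Wᵀ Q Aᵀ R⁻¹ b = V (Vᵀ Q M V + λ² I_k)⁻¹ Vᵀ Q Aᵀ R⁻¹ b. (This expresses that, in exact arithmetic, k steps of gen-LSQR and k steps of CG with Q-inner product applied to (Aᵀ R⁻¹ A Q + λ² I) x = Aᵀ R⁻¹ b produce the same iterate.) -/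

import Mathlib

open Matrix

lemma smul_one_posDef {k : ℕ} {c : ℝ} (hc : 0 < c) :
    (c • (1 : Matrix (Fin k) (Fin k) ℝ)).PosDef := by
  rw [smul_one_eq_diagonal]
  exact Matrix.PosDef.diagonal fun _ => hc

theorem stmt_0 {m n k : ℕ} (A : Matrix (Fin m) (Fin n) ℝ) (b : Fin m → ℝ)
    (R : Matrix (Fin m) (Fin m) ℝ) (Q : Matrix (Fin n) (Fin n) ℝ)
    (hR : R.PosDef) (hQ : Q.PosDef) (lam : ℝ) (hlam : lam ≠ 0)
    (V W : Matrix (Fin n) (Fin k) ℝ)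
    (hV : Vᵀ * Q * V = 1) (hW : Wᵀ * Q * W = 1)
    (hspan : Submodule.span ℝ (Set.range fun j : Fin k => fun i : Fin n => V i j)
           = Submodule.span ℝ (Set.range fun j : Fin k => fun i : Fin n => W i j)) :
    IsUnit (Vᵀ * Q * (Aᵀ * R⁻¹ * A * Q) * V + lam ^ 2 • (1 : Matrix (Fin k) (Fin k) ℝ)) ∧
    IsUnit (Wᵀ * Q * (Aᵀ * R⁻¹ * A * Q) * W + lam ^ 2 • (1 : Matrix (Fin k) (Fin k) ℝ)) ∧
    (W * (Wᵀ * Q * (Aᵀ * R⁻¹ * A * Q) * W + lam ^ 2 • (1 : Matrix (Fin k) (Fin k) ℝ))⁻¹ *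
        Wᵀ * Q * Aᵀ * R⁻¹) *ᵥ b
      = (V * (Vᵀ * Q * (Aᵀ * R⁻¹ * A * Q) * V + lam ^ 2 • (1 : Matrix (Fin k) (Fin k) ℝ))⁻¹ *
        Vᵀ * Q * Aᵀ * R⁻¹) *ᵥ b := by
  have hQsymm : Qᵀ = Q := hQ.isHermitian.eq
  -- every column of W is in the span of the columns of V
  have hcol : ∀ j : Fin k, (fun i : Fin n => W i j) ∈
      Submodule.span ℝ (Set.range fun j : Fin k => fun i : Fin n => V i j) := by
    intro j
    rw [hspan]
    exact Submodule.subset_span ⟨j, rfl⟩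
  -- the transition matrix
  set C : Matrix (Fin k) (Fin k) ℝ := Vᵀ * Q * W with hC
  have hVC : V * C = W := by
    ext i j
    obtain ⟨a, ha⟩ := (Finsupp.mem_span_range_iff_exists_finsupp).mp (hcol j)
    have hWa : (fun i : Fin n => W i j) = V *ᵥ a := by
      funext i
      rw [← congrFun ha i]
      simp [Matrix.mulVec, dotProduct, Finsupp.sum_fintype, mul_comm]
    have h1 : (Vᵀ * Q) *ᵥ (fun i : Fin n => W i j) = (a : Fin k → ℝ) := by
      rw [hWa, Matrix.mulVec_mulVec, hV, Matrix.one_mulVec]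
    calc (V * C) i j = (V *ᵥ ((Vᵀ * Q) *ᵥ fun i => W i j)) i := by
          simp [hC, Matrix.mul_apply, Matrix.mulVec, dotProduct,
            Finset.mul_sum, mul_comm, mul_left_comm]
      _ = (V *ᵥ (a : Fin k → ℝ)) i := by rw [h1]
      _ = W i j := by rw [← hWa]
  -- C is orthogonal
  have hCtC : Cᵀ * C = 1 := by
    have : (V * C)ᵀ * Q * (V * C) = 1 := by rw [hVC]; exact hW
    calc Cᵀ * C = Cᵀ * (Vᵀ * Q * V) * C := by rw [hV]; rw [Matrix.mul_one]
      _ = (V * C)ᵀ * Q * (V * C) := by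
          simp only [Matrix.transpose_mul, Matrix.mul_assoc]
      _ = 1 := this
  have hCCt : C * Cᵀ = 1 := mul_eq_one_comm.mp hCtC
  have hCinv : C⁻¹ = Cᵀ := Matrix.inv_eq_right_inv hCCt
  -- positive definiteness of S := VᵀQMV + lam²•1
  set S : Matrix (Fin k) (Fin k) ℝ :=
    Vᵀ * Q * (Aᵀ * R⁻¹ * A * Q) * V + lam ^ 2 • (1 : Matrix (Fin k) (Fin k) ℝ) with hS
  set T : Matrix (Fin k) (Fin k) ℝ :=
    Wᵀ * Q * (Aᵀ * R⁻¹ * A * Q) * W + lam ^ 2 • (1 : Matrix (Fin k) (Fin k) ℝ) with hT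
  have hRinv : (R⁻¹).PosDef := hR.inv
  have hfirst : ∀ (U : Matrix (Fin n) (Fin k) ℝ),
      (Uᵀ * Q * (Aᵀ * R⁻¹ * A * Q) * U).PosSemidef := by
    intro U
    have key : Uᵀ * Q * (Aᵀ * R⁻¹ * A * Q) * U = (A * Q * U)ᵀ * R⁻¹ * (A * Q * U) := by
      simp only [Matrix.transpose_mul, hQsymm, Matrix.mul_assoc]
    rw [key]
    have := hRinv.posSemidef.conjTranspose_mul_mul_same (A * Q * U)
    simpa using this
  have hlamsq : (0:ℝ) < lam ^ 2 := by positivity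
  have hSpd : S.PosDef := Matrix.PosDef.posSemidef_add (hfirst V) (smul_one_posDef hlamsq)
  have hTpd : T.PosDef := Matrix.PosDef.posSemidef_add (hfirst W) (smul_one_posDef hlamsq)
  refine ⟨hSpd.isUnit, hTpd.isUnit, ?_⟩
  -- T = Cᵀ * S * C
  have hTeq : T = Cᵀ * S * C := by
    rw [hS, hT, ← hVC]
    have h2 : Cᵀ * (lam ^ 2 • (1 : Matrix (Fin k) (Fin k) ℝ)) * C
        = lam ^ 2 • (1 : Matrix (Fin k) (Fin k) ℝ) := by
      rw [Matrix.mul_smul, Matrix.smul_mul, Matrix.mul_one, hCtC]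
    rw [Matrix.mul_add, Matrix.add_mul, h2]
    congr 1
    simp only [Matrix.transpose_mul, Matrix.mul_assoc]
  have hCunit : IsUnit C := Matrix.isUnit_iff_isUnit_det _ |>.mpr
    (IsUnit.of_mul_eq_one _ (by rw [← Matrix.det_transpose C, ← Matrix.det_mul, hCtC, Matrix.det_one]))
  have hCtunit : IsUnit Cᵀ := Matrix.isUnit_iff_isUnit_det _ |>.mpr (by
    rw [Matrix.det_transpose]; exact Matrix.isUnit_iff_isUnit_det _ |>.mp hCunit)
  have hCtinv : Cᵀ⁻¹ = C := Matrix.inv_eq_right_inv hCtC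
  have hTinv : T⁻¹ = Cᵀ * S⁻¹ * C := by
    rw [hTeq, Matrix.mul_inv_rev, Matrix.mul_inv_rev, hCinv, hCtinv, ← Matrix.mul_assoc]
  have hmat : W * T⁻¹ * Wᵀ = V * S⁻¹ * Vᵀ := by
    rw [hTinv, ← hVC]
    simp only [Matrix.transpose_mul]
    calc V * C * (Cᵀ * S⁻¹ * C) * (Cᵀ * Vᵀ)
        = V * (C * Cᵀ) * S⁻¹ * (C * Cᵀ) * Vᵀ := by
          simp only [Matrix.mul_assoc]
      _ = V * S⁻¹ * Vᵀ := by rw [hCCt]; simp only [Matrix.mul_one, Matrix.mul_assoc]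
  have : W * T⁻¹ * Wᵀ * Q * Aᵀ * R⁻¹ = V * S⁻¹ * Vᵀ * Q * Aᵀ * R⁻¹ := by rw [hmat]
  rw [this]
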